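/- Let u ∈ ℂ be a primitive 2d-th root of unity (so u^d = −1) and c ∈ ℂ with c^d = 2, and consider the 3d lines of the arrangement M: z = u^{−k}c·y (family M_x), x = u^{−k}c·z (family M_y), y = u^{−k}c·x (family M_z), for k odd with 0 < k < 2d. Then: (i) any point of ℙ²(ℂ) on two distinct lines of the same family is the corresponding coordinate point ((1:0:0), (0:1:0), (0:0:1) respectively), so the coordinate points are ordinary d-fold points of M; (ii) the lines z − u^{−k₁}c·y = 0 and y − u^{−k₂}c·x = 0 meet exactly at the point (1 : u^{−k₂}c : u^{−(k₁+k₂)}c²), which lies on no line of M_y and does not lie on the Fermat curve F_d; hence all intersection points of lines from different families are ordinary double points of M, and there are 3d² of them. -/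

import Mathlib

open scoped LinearAlgebra.Projectivization

/-- The point of `ℙ²(ℂ)` with homogeneous coordinates `v` (junk value if `v = 0`). -/
noncomputable def P2mk (v : Fin 3 → ℂ) : ℙ ℂ (Fin 3 → ℂ) :=
  if hv : v ≠ 0 then Projectivization.mk ℂ v hv
  else Projectivization.mk ℂ ![1, 0, 0] (fun h => by simpa using congrFun h 0)

lemma vec3_eq_zero {v : Fin 3 → ℂ} (h0 : v 0 = 0) (h1 : v 1 = 0) (h2 : v 2 = 0) : v = 0 :=
  funext fun i => by fin_cases i <;> assumption

lemma eq_P2mk_of_smul {v : Fin 3 → ℂ} (hv : v ≠ 0) (P : ℙ ℂ (Fin 3 → ℂ)) {t : ℂ}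
    (h : P.rep = t • v) : P = P2mk v := by
  rw [P2mk, dif_pos hv, ← P.mk_rep]
  exact (Projectivization.mk_eq_mk_iff' ℂ _ _ P.rep_nonzero hv).2 ⟨t, h.symm⟩

lemma exists_smul_of_eq_P2mk {v : Fin 3 → ℂ} (hv : v ≠ 0) (P : ℙ ℂ (Fin 3 → ℂ))
    (h : P = P2mk v) : ∃ t : ℂ, t ≠ 0 ∧ P.rep = t • v := by
  rw [P2mk, dif_pos hv, ← P.mk_rep] at h
  obtain ⟨a, ha⟩ := (Projectivization.mk_eq_mk_iff ℂ _ _ P.rep_nonzero hv).1 h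
  exact ⟨a, a.ne_zero, ha.symm⟩

lemma P2mk_smul {v w : Fin 3 → ℂ} (hv : v ≠ 0) (hw : w ≠ 0) (h : P2mk v = P2mk w) :
    ∃ t : ℂ, t • w = v := by
  rw [P2mk, dif_pos hv, P2mk, dif_pos hw] at h
  exact (Projectivization.mk_eq_mk_iff' ℂ _ _ hv hw).1 h

/-- Intersection point of `M_x` line `p.1` with `M_y` line `p.2`. -/
noncomputable def linePt1 (u c : ℂ) (p : ℕ × ℕ) : ℙ ℂ (Fin 3 → ℂ) :=
  P2mk ![((u ^ p.2)⁻¹ * c) * ((u ^ p.1)⁻¹ * c), 1, (u ^ p.1)⁻¹ * c]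

/-- Intersection point of `M_x` line `p.1` with `M_z` line `p.2`. -/
noncomputable def linePt2 (u c : ℂ) (p : ℕ × ℕ) : ℙ ℂ (Fin 3 → ℂ) :=
  P2mk ![1, (u ^ p.2)⁻¹ * c, ((u ^ p.1)⁻¹ * c) * ((u ^ p.2)⁻¹ * c)]

/-- Intersection point of `M_y` line `p.1` with `M_z` line `p.2`. -/
noncomputable def linePt3 (u c : ℂ) (p : ℕ × ℕ) : ℙ ℂ (Fin 3 → ℂ) :=
  P2mk ![(u ^ p.1)⁻¹ * c, ((u ^ p.2)⁻¹ * c) * ((u ^ p.1)⁻¹ * c), 1]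

/-- Intersection pattern of the `3d` lines of the arrangement
`M : (z^d + 2y^d)(x^d + 2z^d)(y^d + 2x^d) = 0`, whose families are
`M_x : z = u^{-k}c y`, `M_y : x = u^{-k}c z`, `M_z : y = u^{-k}c x` for `k` odd,
`0 < k < 2d`, where `u` is a primitive `2d`-th root of unity and `c^d = 2`:
(i) two distinct lines of one family meet only at the corresponding coordinate point, so
the coordinate points are ordinary `d`-fold points of `M`;
(ii) the lines `z - u^{-k₁}c y = 0` and `y - u^{-k₂}c x = 0` meet exactly at
`(1 : u^{-k₂}c : u^{-(k₁+k₂)}c²)`, which lies on no line of `M_y` and not on the Fermat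
curve `F_d`; all intersection points of lines from different families are ordinary double
points of `M`, and there are `3d²` of them. -/
theorem fermat_M_arrangement (d : ℕ) (hd : 3 ≤ d) (u c : ℂ)
    (hu : IsPrimitiveRoot u (2 * d)) (hc : c ^ d = 2) :
    -- (i)
    (∀ k₁ k₂ : ℕ, Odd k₁ → k₁ < 2 * d → Odd k₂ → k₂ < 2 * d → k₁ ≠ k₂ →
      ∀ P : ℙ ℂ (Fin 3 → ℂ),
        P.rep 2 = (u ^ k₁)⁻¹ * c * P.rep 1 → P.rep 2 = (u ^ k₂)⁻¹ * c * P.rep 1 →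
        P = P2mk ![1, 0, 0]) ∧
    (∀ k₁ k₂ : ℕ, Odd k₁ → k₁ < 2 * d → Odd k₂ → k₂ < 2 * d → k₁ ≠ k₂ →
      ∀ P : ℙ ℂ (Fin 3 → ℂ),
        P.rep 0 = (u ^ k₁)⁻¹ * c * P.rep 2 → P.rep 0 = (u ^ k₂)⁻¹ * c * P.rep 2 →
        P = P2mk ![0, 1, 0]) ∧
    (∀ k₁ k₂ : ℕ, Odd k₁ → k₁ < 2 * d → Odd k₂ → k₂ < 2 * d → k₁ ≠ k₂ →
      ∀ P : ℙ ℂ (Fin 3 → ℂ),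
        P.rep 1 = (u ^ k₁)⁻¹ * c * P.rep 0 → P.rep 1 = (u ^ k₂)⁻¹ * c * P.rep 0 →
        P = P2mk ![0, 0, 1]) ∧
    -- (ii)
    (∀ k₁ k₂ : ℕ, Odd k₁ → k₁ < 2 * d → Odd k₂ → k₂ < 2 * d →
      (∀ P : ℙ ℂ (Fin 3 → ℂ),
        (P.rep 2 = (u ^ k₁)⁻¹ * c * P.rep 1 ∧ P.rep 1 = (u ^ k₂)⁻¹ * c * P.rep 0) ↔
          P = P2mk ![1, (u ^ k₂)⁻¹ * c, (u ^ (k₁ + k₂))⁻¹ * c ^ 2]) ∧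
      (∀ k : ℕ, Odd k → k < 2 * d →
        (1 : ℂ) ≠ (u ^ k)⁻¹ * c * ((u ^ (k₁ + k₂))⁻¹ * c ^ 2)) ∧
      (1 : ℂ) ^ d + ((u ^ k₂)⁻¹ * c) ^ d + ((u ^ (k₁ + k₂))⁻¹ * c ^ 2) ^ d ≠ 0) ∧
    Set.ncard {P : ℙ ℂ (Fin 3 → ℂ) |
        ((∃ k, Odd k ∧ k < 2 * d ∧ P.rep 2 = (u ^ k)⁻¹ * c * P.rep 1) ∧
          (∃ k, Odd k ∧ k < 2 * d ∧ P.rep 0 = (u ^ k)⁻¹ * c * P.rep 2)) ∨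
        ((∃ k, Odd k ∧ k < 2 * d ∧ P.rep 2 = (u ^ k)⁻¹ * c * P.rep 1) ∧
          (∃ k, Odd k ∧ k < 2 * d ∧ P.rep 1 = (u ^ k)⁻¹ * c * P.rep 0)) ∨
        ((∃ k, Odd k ∧ k < 2 * d ∧ P.rep 0 = (u ^ k)⁻¹ * c * P.rep 2) ∧
          (∃ k, Odd k ∧ k < 2 * d ∧ P.rep 1 = (u ^ k)⁻¹ * c * P.rep 0))} = 3 * d ^ 2 := by
  -- basic arithmetic facts
  have hd0 : 0 < d := by omega
  have hu2d : u ^ (2 * d) = 1 := hu.pow_eq_one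
  have hudne : u ^ d ≠ 1 := hu.pow_ne_one_of_pos_of_lt hd0.ne' (by omega)
  have hud : u ^ d = -1 := by
    have hsq : (u ^ d - 1) * (u ^ d + 1) = 0 := by
      have : (u ^ d) ^ 2 = 1 := by rw [← pow_mul, mul_comm]; exact hu2d
      linear_combination this
    rcases mul_eq_zero.1 hsq with h | h
    · exact absurd (by linear_combination h) hudne
    · linear_combination h
  have hu0 : u ≠ 0 := hu.ne_zero (by omega)
  have hc0 : c ≠ 0 := by
    intro h; rw [h, zero_pow hd0.ne'] at hc; exact two_ne_zero hc.symm
  have hak0 : ∀ k : ℕ, (u ^ k)⁻¹ * c ≠ 0 := fun k =>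
    mul_ne_zero (inv_ne_zero (pow_ne_zero _ hu0)) hc0
  have had : ∀ k : ℕ, Odd k → ((u ^ k)⁻¹ * c) ^ d = -2 := by
    intro k hk
    rw [mul_pow, inv_pow, ← pow_mul, mul_comm k d, pow_mul, hud, hk.neg_one_pow, hc]
    norm_num
  have hainj : ∀ k₁ k₂ : ℕ, k₁ < 2 * d → k₂ < 2 * d →
      (u ^ k₁)⁻¹ * c = (u ^ k₂)⁻¹ * c → k₁ = k₂ := by
    intro k₁ k₂ h1 h2 h
    exact hu.pow_inj h1 h2 (inv_injective (mul_right_cancel₀ hc0 h))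
  have key : ∀ k₁ k₂ k₃ : ℕ, Odd k₁ → Odd k₂ → Odd k₃ →
      ((u ^ k₁)⁻¹ * c) * (((u ^ k₂)⁻¹ * c) * ((u ^ k₃)⁻¹ * c)) ≠ 1 := by
    intro k₁ k₂ k₃ h1 h2 h3 h
    have := congrArg (· ^ d) h
    simp only [mul_pow, one_pow, had _ h1, had _ h2, had _ h3] at this
    norm_num at this
  have hsplit : ∀ k₁ k₂ : ℕ, (u ^ (k₁ + k₂))⁻¹ * c ^ 2 =
      ((u ^ k₁)⁻¹ * c) * ((u ^ k₂)⁻¹ * c) := by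
    intro k₁ k₂; rw [pow_add, mul_inv]; ring
  -- same-family intersection lemmas (part i)
  have part1 : ∀ k₁ k₂ : ℕ, Odd k₁ → k₁ < 2 * d → Odd k₂ → k₂ < 2 * d → k₁ ≠ k₂ →
      ∀ P : ℙ ℂ (Fin 3 → ℂ),
        P.rep 2 = (u ^ k₁)⁻¹ * c * P.rep 1 → P.rep 2 = (u ^ k₂)⁻¹ * c * P.rep 1 →
        P = P2mk ![1, 0, 0] := by
    intro k₁ k₂ _ hl1 _ hl2 hne P h1 h2
    have hane : (u ^ k₁)⁻¹ * c ≠ (u ^ k₂)⁻¹ * c := fun h => hne (hainj _ _ hl1 hl2 h)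
    have hy : P.rep 1 = 0 := by
      by_contra hy
      exact hane (mul_right_cancel₀ hy (h1.symm.trans h2))
    have hz : P.rep 2 = 0 := by rw [h1, hy, mul_zero]
    have hx : P.rep 0 ≠ 0 := fun hx => P.rep_nonzero (vec3_eq_zero hx hy hz)
    refine eq_P2mk_of_smul (v := ![1, 0, 0]) (fun h => by simpa using congrFun h 0) P (t := P.rep 0) ?_
    funext i; fin_cases i <;> simp [hy, hz]
  have part2 : ∀ k₁ k₂ : ℕ, Odd k₁ → k₁ < 2 * d → Odd k₂ → k₂ < 2 * d → k₁ ≠ k₂ →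
      ∀ P : ℙ ℂ (Fin 3 → ℂ),
        P.rep 0 = (u ^ k₁)⁻¹ * c * P.rep 2 → P.rep 0 = (u ^ k₂)⁻¹ * c * P.rep 2 →
        P = P2mk ![0, 1, 0] := by
    intro k₁ k₂ _ hl1 _ hl2 hne P h1 h2
    have hane : (u ^ k₁)⁻¹ * c ≠ (u ^ k₂)⁻¹ * c := fun h => hne (hainj _ _ hl1 hl2 h)
    have hz : P.rep 2 = 0 := by
      by_contra hz
      exact hane (mul_right_cancel₀ hz (h1.symm.trans h2))
    have hx : P.rep 0 = 0 := by rw [h1, hz, mul_zero]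
    have hy : P.rep 1 ≠ 0 := fun hy => P.rep_nonzero (vec3_eq_zero hx hy hz)
    refine eq_P2mk_of_smul (v := ![0, 1, 0]) (fun h => by simpa using congrFun h 1) P (t := P.rep 1) ?_
    funext i; fin_cases i <;> simp [hx, hz]
  have part3 : ∀ k₁ k₂ : ℕ, Odd k₁ → k₁ < 2 * d → Odd k₂ → k₂ < 2 * d → k₁ ≠ k₂ →
      ∀ P : ℙ ℂ (Fin 3 → ℂ),
        P.rep 1 = (u ^ k₁)⁻¹ * c * P.rep 0 → P.rep 1 = (u ^ k₂)⁻¹ * c * P.rep 0 →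
        P = P2mk ![0, 0, 1] := by
    intro k₁ k₂ _ hl1 _ hl2 hne P h1 h2
    have hane : (u ^ k₁)⁻¹ * c ≠ (u ^ k₂)⁻¹ * c := fun h => hne (hainj _ _ hl1 hl2 h)
    have hx : P.rep 0 = 0 := by
      by_contra hx
      exact hane (mul_right_cancel₀ hx (h1.symm.trans h2))
    have hy : P.rep 1 = 0 := by rw [h1, hx, mul_zero]
    have hz : P.rep 2 ≠ 0 := fun hz => P.rep_nonzero (vec3_eq_zero hx hy hz)
    refine eq_P2mk_of_smul (v := ![0, 0, 1]) (fun h => by simpa using congrFun h 2) P (t := P.rep 2) ?_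
    funext i; fin_cases i <;> simp [hx, hy]
  -- cross-family intersection iffs
  have hiff₂ : ∀ k₁ k₂ : ℕ, ∀ P : ℙ ℂ (Fin 3 → ℂ),
      (P.rep 2 = (u ^ k₁)⁻¹ * c * P.rep 1 ∧ P.rep 1 = (u ^ k₂)⁻¹ * c * P.rep 0) ↔
        P = P2mk ![1, (u ^ k₂)⁻¹ * c, ((u ^ k₁)⁻¹ * c) * ((u ^ k₂)⁻¹ * c)] := by
    intro k₁ k₂ P
    have hv : (![1, (u ^ k₂)⁻¹ * c, ((u ^ k₁)⁻¹ * c) * ((u ^ k₂)⁻¹ * c)] : Fin 3 → ℂ) ≠ 0 :=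
      fun h => by simpa using congrFun h 0
    constructor
    · rintro ⟨h1, h2⟩
      have hx : P.rep 0 ≠ 0 := by
        intro hx
        have hy : P.rep 1 = 0 := by rw [h2, hx, mul_zero]
        have hz : P.rep 2 = 0 := by rw [h1, hy, mul_zero]
        exact P.rep_nonzero (vec3_eq_zero hx hy hz)
      refine eq_P2mk_of_smul hv P (t := P.rep 0) ?_
      funext i; fin_cases i <;>
        simp [h1, h2, Pi.smul_apply, smul_eq_mul] <;> ring
    · intro h
      obtain ⟨t, ht, hP⟩ := exists_smul_of_eq_P2mk hv P h
      have e0 := congrFun hP 0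
      have e1 := congrFun hP 1
      have e2 := congrFun hP 2
      simp [Pi.smul_apply, smul_eq_mul] at e0 e1 e2
      rw [e0, e1, e2]; constructor <;> ring
  have hiff₁ : ∀ k₁ k₂ : ℕ, ∀ P : ℙ ℂ (Fin 3 → ℂ),
      (P.rep 2 = (u ^ k₁)⁻¹ * c * P.rep 1 ∧ P.rep 0 = (u ^ k₂)⁻¹ * c * P.rep 2) ↔
        P = P2mk ![((u ^ k₂)⁻¹ * c) * ((u ^ k₁)⁻¹ * c), 1, (u ^ k₁)⁻¹ * c] := by
    intro k₁ k₂ P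
    have hv : (![((u ^ k₂)⁻¹ * c) * ((u ^ k₁)⁻¹ * c), 1, (u ^ k₁)⁻¹ * c] : Fin 3 → ℂ) ≠ 0 :=
      fun h => by simpa using congrFun h 1
    constructor
    · rintro ⟨h1, h2⟩
      have hy : P.rep 1 ≠ 0 := by
        intro hy
        have hz : P.rep 2 = 0 := by rw [h1, hy, mul_zero]
        have hx : P.rep 0 = 0 := by rw [h2, hz, mul_zero]
        exact P.rep_nonzero (vec3_eq_zero hx hy hz)
      refine eq_P2mk_of_smul hv P (t := P.rep 1) ?_
      funext i; fin_cases i <;>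
        simp [h1, h2, Pi.smul_apply, smul_eq_mul] <;> ring
    · intro h
      obtain ⟨t, ht, hP⟩ := exists_smul_of_eq_P2mk hv P h
      have e0 := congrFun hP 0
      have e1 := congrFun hP 1
      have e2 := congrFun hP 2
      simp [Pi.smul_apply, smul_eq_mul] at e0 e1 e2
      rw [e0, e1, e2]; constructor <;> ring
  have hiff₃ : ∀ k₁ k₂ : ℕ, ∀ P : ℙ ℂ (Fin 3 → ℂ),
      (P.rep 0 = (u ^ k₁)⁻¹ * c * P.rep 2 ∧ P.rep 1 = (u ^ k₂)⁻¹ * c * P.rep 0) ↔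
        P = P2mk ![(u ^ k₁)⁻¹ * c, ((u ^ k₂)⁻¹ * c) * ((u ^ k₁)⁻¹ * c), 1] := by
    intro k₁ k₂ P
    have hv : (![(u ^ k₁)⁻¹ * c, ((u ^ k₂)⁻¹ * c) * ((u ^ k₁)⁻¹ * c), 1] : Fin 3 → ℂ) ≠ 0 :=
      fun h => by simpa using congrFun h 2
    constructor
    · rintro ⟨h1, h2⟩
      have hz : P.rep 2 ≠ 0 := by
        intro hz
        have hx : P.rep 0 = 0 := by rw [h1, hz, mul_zero]
        have hy : P.rep 1 = 0 := by rw [h2, hx, mul_zero]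
        exact P.rep_nonzero (vec3_eq_zero hx hy hz)
      refine eq_P2mk_of_smul hv P (t := P.rep 2) ?_
      funext i; fin_cases i <;>
        simp [h1, h2, Pi.smul_apply, smul_eq_mul] <;> ring
    · intro h
      obtain ⟨t, ht, hP⟩ := exists_smul_of_eq_P2mk hv P h
      have e0 := congrFun hP 0
      have e1 := congrFun hP 1
      have e2 := congrFun hP 2
      simp [Pi.smul_apply, smul_eq_mul] at e0 e1 e2
      rw [e0, e1, e2]; constructor <;> ring
  refine ⟨part1, part2, part3, ?_, ?_⟩
  · intro k₁ k₂ hk₁ hl₁ hk₂ hl₂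
    refine ⟨?_, ?_, ?_⟩
    · intro P; rw [hsplit k₁ k₂]; exact hiff₂ k₁ k₂ P
    · intro k hk hl h
      rw [hsplit k₁ k₂] at h
      exact key k k₁ k₂ hk hk₁ hk₂ (by linear_combination -h)
    · rw [one_pow, had _ hk₂, hsplit, mul_pow, had _ hk₁, had _ hk₂]
      norm_num
  · -- the counting
    classical
    set K : Set ℕ := {k | Odd k ∧ k < 2 * d} with hK
    set KK : Set (ℕ × ℕ) := K ×ˢ K with hKK
    have hKfin : K.Finite := Set.Finite.subset (Set.finite_Iio (2 * d)) (fun k hk => hk.2)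
    have hKKfin : KK.Finite := hKfin.prod hKfin
    set Kf : Finset ℕ := (Finset.range d).image (fun i => 2 * i + 1) with hKf
    have hKeq : K = ↑Kf := by
      ext k
      simp only [hK, hKf, Set.mem_setOf_eq, Finset.coe_image, Set.mem_image,
        Finset.mem_coe, Finset.coe_range, Set.mem_Iio]
      constructor
      · rintro ⟨hodd, hlt⟩
        rw [Nat.odd_iff] at hodd
        exact ⟨k / 2, by omega, by omega⟩
      · rintro ⟨i, hi, rfl⟩
        exact ⟨by rw [Nat.odd_iff]; omega, by omega⟩
    have hKKcard : KK.ncard = d * d := by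
      rw [hKK, hKeq, ← Finset.coe_product, Set.ncard_coe_finset, Finset.card_product]
      have : Kf.card = d := by
        rw [hKf, Finset.card_image_of_injective _ (fun a b h => by omega),
          Finset.card_range]
      rw [this]
    -- nonzero coordinate vectors
    have hv1 : ∀ k₁ k₂ : ℕ,
        (![((u ^ k₂)⁻¹ * c) * ((u ^ k₁)⁻¹ * c), 1, (u ^ k₁)⁻¹ * c] : Fin 3 → ℂ) ≠ 0 :=
      fun k₁ k₂ h => by simpa using congrFun h 1
    have hv2 : ∀ k₁ k₂ : ℕ,
        (![1, (u ^ k₂)⁻¹ * c, ((u ^ k₁)⁻¹ * c) * ((u ^ k₂)⁻¹ * c)] : Fin 3 → ℂ) ≠ 0 :=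
      fun k₁ k₂ h => by simpa using congrFun h 0
    have hv3 : ∀ k₁ k₂ : ℕ,
        (![(u ^ k₁)⁻¹ * c, ((u ^ k₂)⁻¹ * c) * ((u ^ k₁)⁻¹ * c), 1] : Fin 3 → ℂ) ≠ 0 :=
      fun k₁ k₂ h => by simpa using congrFun h 2
    -- the set equals the union of the three images
    have hSeq : {P : ℙ ℂ (Fin 3 → ℂ) |
        ((∃ k, Odd k ∧ k < 2 * d ∧ P.rep 2 = (u ^ k)⁻¹ * c * P.rep 1) ∧
          (∃ k, Odd k ∧ k < 2 * d ∧ P.rep 0 = (u ^ k)⁻¹ * c * P.rep 2)) ∨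
        ((∃ k, Odd k ∧ k < 2 * d ∧ P.rep 2 = (u ^ k)⁻¹ * c * P.rep 1) ∧
          (∃ k, Odd k ∧ k < 2 * d ∧ P.rep 1 = (u ^ k)⁻¹ * c * P.rep 0)) ∨
        ((∃ k, Odd k ∧ k < 2 * d ∧ P.rep 0 = (u ^ k)⁻¹ * c * P.rep 2) ∧
          (∃ k, Odd k ∧ k < 2 * d ∧ P.rep 1 = (u ^ k)⁻¹ * c * P.rep 0))}
        = linePt1 u c '' KK ∪ (linePt2 u c '' KK ∪ linePt3 u c '' KK) := by
      ext P
      simp only [Set.mem_setOf_eq, Set.mem_union, Set.mem_image, hKK, Set.mem_prod, hK]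
      constructor
      · rintro (⟨⟨k, hk, hl, h1⟩, ⟨k', hk', hl', h2⟩⟩ |
          ⟨⟨k, hk, hl, h1⟩, ⟨k', hk', hl', h2⟩⟩ | ⟨⟨k, hk, hl, h1⟩, ⟨k', hk', hl', h2⟩⟩)
        · exact Or.inl ⟨(k, k'), ⟨⟨hk, hl⟩, hk', hl'⟩,
            ((hiff₁ k k' P).1 ⟨h1, h2⟩).symm⟩
        · exact Or.inr (Or.inl ⟨(k, k'), ⟨⟨hk, hl⟩, hk', hl'⟩,
            ((hiff₂ k k' P).1 ⟨h1, h2⟩).symm⟩)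
        · exact Or.inr (Or.inr ⟨(k, k'), ⟨⟨hk, hl⟩, hk', hl'⟩,
            ((hiff₃ k k' P).1 ⟨h1, h2⟩).symm⟩)
      · rintro (⟨⟨k, k'⟩, ⟨⟨hk, hl⟩, hk', hl'⟩, rfl⟩ |
          ⟨⟨k, k'⟩, ⟨⟨hk, hl⟩, hk', hl'⟩, rfl⟩ | ⟨⟨k, k'⟩, ⟨⟨hk, hl⟩, hk', hl'⟩, rfl⟩)
        · obtain ⟨h1, h2⟩ := (hiff₁ k k' _).2 rfl
          exact Or.inl ⟨⟨k, hk, hl, h1⟩, ⟨k', hk', hl', h2⟩⟩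
        · obtain ⟨h1, h2⟩ := (hiff₂ k k' _).2 rfl
          exact Or.inr (Or.inl ⟨⟨k, hk, hl, h1⟩, ⟨k', hk', hl', h2⟩⟩)
        · obtain ⟨h1, h2⟩ := (hiff₃ k k' _).2 rfl
          exact Or.inr (Or.inr ⟨⟨k, hk, hl, h1⟩, ⟨k', hk', hl', h2⟩⟩)
    -- injectivity
    have hinj₁ : Set.InjOn (linePt1 u c) KK := by
      rintro ⟨k₁, k₂⟩ ⟨⟨hk₁, hl₁⟩, hk₂, hl₂⟩ ⟨l₁, l₂⟩ ⟨⟨hm₁, hn₁⟩, hm₂, hn₂⟩ h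
      obtain ⟨t, ht⟩ := P2mk_smul (hv1 k₁ k₂) (hv1 l₁ l₂) h
      have e0 := congrFun ht 0
      have e1 := congrFun ht 1
      have e2 := congrFun ht 2
      simp only [Pi.smul_apply, smul_eq_mul, Matrix.cons_val_zero, Matrix.cons_val_one,
        Matrix.head_cons, Matrix.cons_val_two, Matrix.tail_cons, mul_one] at e0 e1 e2
      subst e1
      rw [one_mul] at e0 e2
      have h1 : k₁ = l₁ := hainj _ _ hl₁ hn₁ e2.symm
      have h2 : k₂ = l₂ := hainj _ _ hl₂ hn₂
        (mul_right_cancel₀ (hak0 k₁) (by rw [← h1] at e0; exact e0.symm))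
      simp [h1, h2]
    have hinj₂ : Set.InjOn (linePt2 u c) KK := by
      rintro ⟨k₁, k₂⟩ ⟨⟨hk₁, hl₁⟩, hk₂, hl₂⟩ ⟨l₁, l₂⟩ ⟨⟨hm₁, hn₁⟩, hm₂, hn₂⟩ h
      obtain ⟨t, ht⟩ := P2mk_smul (hv2 k₁ k₂) (hv2 l₁ l₂) h
      have e0 := congrFun ht 0
      have e1 := congrFun ht 1
      have e2 := congrFun ht 2
      simp only [Pi.smul_apply, smul_eq_mul, Matrix.cons_val_zero, Matrix.cons_val_one,
        Matrix.head_cons, Matrix.cons_val_two, Matrix.tail_cons, mul_one] at e0 e1 e2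
      subst e0
      rw [one_mul] at e1 e2
      have h2 : k₂ = l₂ := hainj _ _ hl₂ hn₂ e1.symm
      have h1 : k₁ = l₁ := hainj _ _ hl₁ hn₁
        (mul_left_cancel₀ (hak0 k₂) (by rw [← h2] at e2
                                        linear_combination -e2))
      simp [h1, h2]
    have hinj₃ : Set.InjOn (linePt3 u c) KK := by
      rintro ⟨k₁, k₂⟩ ⟨⟨hk₁, hl₁⟩, hk₂, hl₂⟩ ⟨l₁, l₂⟩ ⟨⟨hm₁, hn₁⟩, hm₂, hn₂⟩ h
      obtain ⟨t, ht⟩ := P2mk_smul (hv3 k₁ k₂) (hv3 l₁ l₂) h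
      have e0 := congrFun ht 0
      have e1 := congrFun ht 1
      have e2 := congrFun ht 2
      simp only [Pi.smul_apply, smul_eq_mul, Matrix.cons_val_zero, Matrix.cons_val_one,
        Matrix.head_cons, Matrix.cons_val_two, Matrix.tail_cons, mul_one] at e0 e1 e2
      subst e2
      rw [one_mul] at e0 e1
      have h1 : k₁ = l₁ := hainj _ _ hl₁ hn₁ e0.symm
      have h2 : k₂ = l₂ := hainj _ _ hl₂ hn₂
        (mul_right_cancel₀ (hak0 k₁) (by rw [← h1] at e1; exact e1.symm))
      simp [h1, h2]
    -- disjointness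
    have hd₁₂ : Disjoint (linePt1 u c '' KK) (linePt2 u c '' KK) := by
      rw [Set.disjoint_left]
      rintro P ⟨⟨k₁, k₂⟩, ⟨⟨hk₁, hl₁⟩, hk₂, hl₂⟩, rfl⟩ ⟨⟨l₁, l₂⟩, ⟨⟨hm₁, hn₁⟩, hm₂, hn₂⟩, hqe⟩
      obtain ⟨t, ht⟩ := P2mk_smul (hv2 l₁ l₂) (hv1 k₁ k₂) hqe
      have e0 := congrFun ht 0
      have e1 := congrFun ht 1
      simp only [Pi.smul_apply, smul_eq_mul, Matrix.cons_val_zero, Matrix.cons_val_one,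
        Matrix.head_cons, mul_one] at e0 e1
      subst e1
      exact key l₂ k₂ k₁ hm₂ hk₂ hk₁ (by linear_combination e0)
    have hd₁₃ : Disjoint (linePt1 u c '' KK) (linePt3 u c '' KK) := by
      rw [Set.disjoint_left]
      rintro P ⟨⟨k₁, k₂⟩, ⟨⟨hk₁, hl₁⟩, hk₂, hl₂⟩, rfl⟩ ⟨⟨l₁, l₂⟩, ⟨⟨hm₁, hn₁⟩, hm₂, hn₂⟩, hqe⟩
      obtain ⟨t, ht⟩ := P2mk_smul (hv3 l₁ l₂) (hv1 k₁ k₂) hqe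
      have e1 := congrFun ht 1
      have e2 := congrFun ht 2
      simp only [Pi.smul_apply, smul_eq_mul, Matrix.cons_val_zero, Matrix.cons_val_one,
        Matrix.head_cons, Matrix.cons_val_two, Matrix.tail_cons, mul_one] at e1 e2
      subst e1
      exact key l₂ l₁ k₁ hm₂ hm₁ hk₁ (by linear_combination e2)
    have hd₂₃ : Disjoint (linePt2 u c '' KK) (linePt3 u c '' KK) := by
      rw [Set.disjoint_left]
      rintro P ⟨⟨k₁, k₂⟩, ⟨⟨hk₁, hl₁⟩, hk₂, hl₂⟩, rfl⟩ ⟨⟨l₁, l₂⟩, ⟨⟨hm₁, hn₁⟩, hm₂, hn₂⟩, hqe⟩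
      obtain ⟨t, ht⟩ := P2mk_smul (hv3 l₁ l₂) (hv2 k₁ k₂) hqe
      have e0 := congrFun ht 0
      have e2 := congrFun ht 2
      simp only [Pi.smul_apply, smul_eq_mul, Matrix.cons_val_zero, Matrix.cons_val_one,
        Matrix.head_cons, Matrix.cons_val_two, Matrix.tail_cons, mul_one] at e0 e2
      subst e0
      exact key l₁ k₁ k₂ hm₁ hk₁ hk₂ (by linear_combination e2)
    -- put it together
    rw [hSeq, Set.ncard_union_eq (Set.disjoint_union_right.2 ⟨hd₁₂, hd₁₃⟩)
        (hKKfin.image _) ((hKKfin.image _).union (hKKfin.image _)),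
      Set.ncard_union_eq hd₂₃ (hKKfin.image _) (hKKfin.image _),
      Set.ncard_image_of_injOn hinj₁, Set.ncard_image_of_injOn hinj₂,
      Set.ncard_image_of_injOn hinj₃, hKKcard]
    ring
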